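/- Harnack-type bounds for the spectral radii: Let h : S → ℝ be a strictly positive function with Σ_t m(s,t)·h(t) = r·h(s) for all s ∈ S, where r > 0 is the spectral radius of m. Then r · (min_{s∈S} h(s)) / (max_{s∈S} h(s)) ≤ 𝐫 ≤ r · (max_{s∈S} h(s)) / (min_{s∈S} h(s)). -/

import Mathlib

open Filter Topology

/-- Concatenation of a type `t` with a memory sequence `x`. -/
def memCons {S : Type*} (t : S) (x : ℕ → S) : ℕ → S
  | 0 => t
  | n + 1 => x n

/-- **Harnack-type bounds for the spectral radii (equation (3.4)).** If `h : S → ℝ` is a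
strictly positive right eigenfunction of `m` for the spectral radius `r > 0`, then
`r · (min h)/(max h) ≤ R ≤ r · (max h)/(min h)`, where `R` is the spectral radius of the
memory operator. -/
theorem harnack_bounds_spectral_radius
    {S : Type*} [Fintype S] [Nonempty S] [DecidableEq S]
    [TopologicalSpace S] [DiscreteTopology S]
    (m : S → S → ℝ)
    (hm_nonneg : ∀ s t, 0 ≤ m s t)
    (hm_prim : ∃ k : ℕ, 1 ≤ k ∧ ∀ s t, 0 < ((Matrix.of m) ^ k) s t)
    (τ : ℕ → ℝ)
    (hτ_nonneg : ∀ j, 0 ≤ τ j) (hτ_sum : HasSum τ 1)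
    (hτ_zero : 0 < τ 0)
    (hτ_mean : Summable fun j : ℕ => (j : ℝ) * τ j)
    (T : C(ℕ → S, ℝ) →L[ℝ] C(ℕ → S, ℝ))
    (hT : ∀ (f : C(ℕ → S, ℝ)) (x : ℕ → S),
      T f x = ∑' j : ℕ, τ j * ∑ t : S, m (x j) t * f (memCons t x))
    (M : (S → ℝ) →L[ℝ] (S → ℝ))
    (hM : ∀ (v : S → ℝ) (s : S), M v s = ∑ t : S, m s t * v t)
    (R r : ℝ)
    (hR : Tendsto (fun k : ℕ => ‖T ^ k‖ ^ ((1 : ℝ) / k)) atTop (𝓝 R))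
    (hr : Tendsto (fun k : ℕ => ‖M ^ k‖ ^ ((1 : ℝ) / k)) atTop (𝓝 r))
    (hr_pos : 0 < r)
    (h : S → ℝ) (hh_pos : ∀ s, 0 < h s)
    (hh_eig : ∀ s, ∑ t : S, m s t * h t = r * h s) :
    r * (Finset.univ.inf' Finset.univ_nonempty h) / (Finset.univ.sup' Finset.univ_nonempty h)
      ≤ R ∧
    R ≤ r * (Finset.univ.sup' Finset.univ_nonempty h) /
      (Finset.univ.inf' Finset.univ_nonempty h) := by
  classical
  set a : ℝ := Finset.univ.inf' Finset.univ_nonempty h with ha_def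
  set b : ℝ := Finset.univ.sup' Finset.univ_nonempty h with hb_def
  obtain ⟨s₀⟩ := (inferInstance : Nonempty S)
  have ha_le : ∀ s, a ≤ h s := fun s => Finset.inf'_le h (Finset.mem_univ s)
  have hb_ge : ∀ s, h s ≤ b := fun s => Finset.le_sup' h (Finset.mem_univ s)
  have ha_pos : 0 < a := by
    obtain ⟨s, _, hs⟩ := Finset.exists_mem_eq_inf' Finset.univ_nonempty h
    rw [← ha_def] at hs; rw [hs]; exact hh_pos s
  have hb_pos : 0 < b := lt_of_lt_of_le ha_pos (le_trans (ha_le s₀) (hb_ge s₀))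
  set c₁ : ℝ := r * a / b with hc₁_def
  set c₂ : ℝ := r * b / a with hc₂_def
  have hc₁_pos : 0 < c₁ := by positivity
  have hc₂_pos : 0 < c₂ := by positivity
  -- the eigenfunction-like continuous map H(x) = h(x 0)
  set H : C(ℕ → S, ℝ) :=
    ⟨fun x => h (x 0), continuous_of_discreteTopology.comp (continuous_apply 0)⟩ with hH_def
  have hH_apply : ∀ x, H x = h (x 0) := fun x => rfl
  have hτ_summable : Summable τ := hτ_sum.summable
  -- monotonicity of T
  have mono : ∀ f g : C(ℕ → S, ℝ), (∀ y, f y ≤ g y) → ∀ x, T f x ≤ T g x := by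
    intro f g hfg x
    have h0 : 0 ≤ T (g - f) x := by
      rw [hT]
      refine tsum_nonneg fun j => mul_nonneg (hτ_nonneg j) (Finset.sum_nonneg fun t _ => ?_)
      refine mul_nonneg (hm_nonneg _ _) ?_
      simp only [ContinuousMap.sub_apply]
      linarith [hfg (memCons t x)]
    have h1 : T (g - f) x = T g x - T f x := by rw [map_sub]; simp
    linarith [h1 ▸ h0]
  -- compute T H
  have key : ∀ x, T H x = ∑' j : ℕ, τ j * (r * h (x j)) := by
    intro x
    rw [hT]
    congr 1
    funext j
    congr 1
    rw [← hh_eig (x j)]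
    refine Finset.sum_congr rfl fun t _ => ?_
    congr 1
  have S1 : ∀ x : ℕ → S, Summable (fun j : ℕ => τ j * (r * h (x j))) := by
    intro x
    refine Summable.of_nonneg_of_le
      (fun j => mul_nonneg (hτ_nonneg j) (mul_nonneg hr_pos.le (hh_pos _).le))
      (fun j => mul_le_mul_of_nonneg_left ?_ (hτ_nonneg j))
      (hτ_summable.mul_right (r * b))
    exact mul_le_mul_of_nonneg_left (hb_ge _) hr_pos.le
  have hTH_le : ∀ x, T H x ≤ c₂ * H x := by
    intro x
    have h1 : T H x ≤ r * b := by
      rw [key x]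
      calc (∑' j : ℕ, τ j * (r * h (x j))) ≤ ∑' j : ℕ, τ j * (r * b) := by
            refine Summable.tsum_le_tsum (fun j => mul_le_mul_of_nonneg_left
              (mul_le_mul_of_nonneg_left (hb_ge _) hr_pos.le) (hτ_nonneg j))
              (S1 x) (hτ_summable.mul_right (r * b))
        _ = r * b := by rw [tsum_mul_right, hτ_sum.tsum_eq, one_mul]
    have h2 : r * b = c₂ * a := by rw [hc₂_def, div_mul_cancel₀ _ ha_pos.ne']
    have h3 : c₂ * a ≤ c₂ * H x := by
      rw [hH_apply]; exact mul_le_mul_of_nonneg_left (ha_le _) hc₂_pos.le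
    linarith
  have hTH_ge : ∀ x, c₁ * H x ≤ T H x := by
    intro x
    have h1 : r * a ≤ T H x := by
      rw [key x]
      calc r * a = ∑' j : ℕ, τ j * (r * a) := by rw [tsum_mul_right, hτ_sum.tsum_eq, one_mul]
        _ ≤ ∑' j : ℕ, τ j * (r * h (x j)) := by
            refine Summable.tsum_le_tsum (fun j => mul_le_mul_of_nonneg_left
              (mul_le_mul_of_nonneg_left (ha_le _) hr_pos.le) (hτ_nonneg j))
              (hτ_summable.mul_right (r * a)) (S1 x)
    have h2 : c₁ * b = r * a := by rw [hc₁_def, div_mul_cancel₀ _ hb_pos.ne']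
    have h3 : c₁ * H x ≤ c₁ * b := by
      rw [hH_apply]; exact mul_le_mul_of_nonneg_left (hb_ge _) hc₁_pos.le
    linarith
  -- iterated monotonicity
  have monok : ∀ (k : ℕ) (f g : C(ℕ → S, ℝ)), (∀ y, f y ≤ g y) → ∀ x, (T ^ k) f x ≤ (T ^ k) g x := by
    intro k
    induction k with
    | zero => intro f g hfg x; simpa using hfg x
    | succ n ih =>
      intro f g hfg x
      rw [pow_succ, ContinuousLinearMap.mul_apply, ContinuousLinearMap.mul_apply]
      exact ih (T f) (T g) (mono f g hfg) x
  -- iterated bounds on T^k H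
  have up : ∀ (k : ℕ) (x : ℕ → S), (T ^ k) H x ≤ c₂ ^ k * H x := by
    intro k
    induction k with
    | zero => intro x; simp
    | succ n ih =>
      intro x
      have e1 : (T ^ (n + 1)) H = T ((T ^ n) H) := by
        rw [pow_succ']; rfl
      rw [e1]
      calc T ((T ^ n) H) x ≤ T ((c₂ ^ n) • H) x := by
            refine mono _ _ (fun y => ?_) x
            simpa using ih y
        _ = c₂ ^ n * T H x := by rw [map_smul]; simp
        _ ≤ c₂ ^ n * (c₂ * H x) :=
            mul_le_mul_of_nonneg_left (hTH_le x) (pow_nonneg hc₂_pos.le n)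
        _ = c₂ ^ (n + 1) * H x := by ring
  have low : ∀ (k : ℕ) (x : ℕ → S), c₁ ^ k * H x ≤ (T ^ k) H x := by
    intro k
    induction k with
    | zero => intro x; simp
    | succ n ih =>
      intro x
      have e1 : (T ^ (n + 1)) H = T ((T ^ n) H) := by
        rw [pow_succ']; rfl
      rw [e1]
      calc c₁ ^ (n + 1) * H x = c₁ ^ n * (c₁ * H x) := by ring
        _ ≤ c₁ ^ n * T H x :=
            mul_le_mul_of_nonneg_left (hTH_ge x) (pow_nonneg hc₁_pos.le n)
        _ = T ((c₁ ^ n) • H) x := by rw [map_smul]; simp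
        _ ≤ T ((T ^ n) H) x := by
            refine mono _ _ (fun y => ?_) x
            simpa using ih y
  -- norm upper bound
  have norm_up : ∀ k : ℕ, ‖T ^ k‖ ≤ c₂ ^ k * (b / a) := by
    intro k
    have hC : (0 : ℝ) ≤ c₂ ^ k * (b / a) := by positivity
    refine ContinuousLinearMap.opNorm_le_bound _ hC fun f => ?_
    have hub : ∀ y : ℕ → S, f y ≤ ((‖f‖ / a) • H) y := by
      intro y
      have : f y ≤ ‖f‖ := le_trans (le_abs_self _) (f.norm_coe_le_norm y)
      have h2 : ‖f‖ = (‖f‖ / a) * a := by field_simp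
      have h3 : (‖f‖ / a) * a ≤ (‖f‖ / a) * H y := by
        rw [hH_apply]
        exact mul_le_mul_of_nonneg_left (ha_le _) (by positivity)
      simp only [ContinuousMap.smul_apply, smul_eq_mul]
      linarith
    have hlb : ∀ y : ℕ → S, (-(‖f‖ / a) • H) y ≤ f y := by
      intro y
      have : -‖f‖ ≤ f y := by
        have := le_trans (le_abs_self _) (f.norm_coe_le_norm y)
        have h' := (abs_le.mp (le_trans (le_refl |f y|) (f.norm_coe_le_norm y))).1
        linarith
      have h2 : ‖f‖ = (‖f‖ / a) * a := by field_simp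
      have h3 : (‖f‖ / a) * a ≤ (‖f‖ / a) * H y := by
        rw [hH_apply]
        exact mul_le_mul_of_nonneg_left (ha_le _) (by positivity)
      simp only [ContinuousMap.smul_apply, smul_eq_mul, neg_mul]
      linarith
    have bound : ∀ x : ℕ → S, |(T ^ k) f x| ≤ c₂ ^ k * (b / a) * ‖f‖ := by
      intro x
      have hHb : H x ≤ b := by rw [hH_apply]; exact hb_ge _
      have h1 : (T ^ k) f x ≤ (T ^ k) ((‖f‖ / a) • H) x := monok k _ _ hub x
      have h2 : (T ^ k) ((‖f‖ / a) • H) x = (‖f‖ / a) * (T ^ k) H x := by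
        rw [map_smul]; simp
      have h3 : (T ^ k) H x ≤ c₂ ^ k * b :=
        le_trans (up k x) (mul_le_mul_of_nonneg_left hHb (pow_nonneg hc₂_pos.le k))
      have h4 : (T ^ k) f x ≤ (‖f‖ / a) * (c₂ ^ k * b) := by
        rw [h2] at h1
        refine le_trans h1 (mul_le_mul_of_nonneg_left h3 (by positivity))
      have h5 : (-(‖f‖ / a) • H : C(ℕ → S, ℝ)) = -((‖f‖ / a) • H) := by
        ext y; simp
      have h6 : (T ^ k) (-((‖f‖ / a) • H)) x ≤ (T ^ k) f x := by
        have := monok k _ _ hlb x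
        rwa [h5] at this
      have h7 : (T ^ k) (-((‖f‖ / a) • H)) x = -((‖f‖ / a) * (T ^ k) H x) := by
        rw [map_neg, map_smul]; simp
      have h8 : -((‖f‖ / a) * (c₂ ^ k * b)) ≤ (T ^ k) f x := by
        rw [h7] at h6
        have : (‖f‖ / a) * (T ^ k) H x ≤ (‖f‖ / a) * (c₂ ^ k * b) :=
          mul_le_mul_of_nonneg_left h3 (by positivity)
        linarith
      rw [abs_le]
      constructor
      · have : (‖f‖ / a) * (c₂ ^ k * b) = c₂ ^ k * (b / a) * ‖f‖ := by ring
        linarith [h8, this ▸ h8]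
      · have heq : (‖f‖ / a) * (c₂ ^ k * b) = c₂ ^ k * (b / a) * ‖f‖ := by ring
        linarith [heq ▸ h4]
    calc ‖(T ^ k) f‖ ≤ c₂ ^ k * (b / a) * ‖f‖ := by
          refine (ContinuousMap.norm_le _ (by positivity)).2 fun x => ?_
          exact bound x
      _ = c₂ ^ k * (b / a) * ‖f‖ := rfl
  -- norm lower bound
  have norm_low : ∀ k : ℕ, c₁ ^ k * (a / b) ≤ ‖T ^ k‖ := by
    intro k
    obtain ⟨x₀⟩ : Nonempty (ℕ → S) := ⟨fun _ => s₀⟩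
    have h1 : c₁ ^ k * a ≤ (T ^ k) H x₀ := by
      refine le_trans ?_ (low k x₀)
      rw [hH_apply]
      exact mul_le_mul_of_nonneg_left (ha_le _) (pow_nonneg hc₁_pos.le k)
    have h2 : (T ^ k) H x₀ ≤ ‖(T ^ k) H‖ :=
      le_trans (le_abs_self _) (((T ^ k) H).norm_coe_le_norm x₀)
    have h3 : ‖(T ^ k) H‖ ≤ ‖T ^ k‖ * ‖H‖ := (T ^ k).le_opNorm H
    have h4 : ‖H‖ ≤ b := by
      refine (ContinuousMap.norm_le _ hb_pos.le).2 fun x => ?_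
      rw [hH_apply, Real.norm_eq_abs, abs_of_pos (hh_pos _)]
      exact hb_ge _
    have h5 : c₁ ^ k * a ≤ ‖T ^ k‖ * b := by
      have := mul_le_mul_of_nonneg_left h4 (norm_nonneg (T ^ k))
      calc c₁ ^ k * a ≤ ‖T ^ k‖ * ‖H‖ := by linarith
        _ ≤ ‖T ^ k‖ * b := this
    have heq : c₁ ^ k * (a / b) = (c₁ ^ k * a) / b := by ring
    rw [heq, div_le_iff₀ hb_pos]
    linarith
  -- limits
  have hab_pos : (0 : ℝ) < a / b := by positivity
  have hba_pos : (0 : ℝ) < b / a := by positivity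
  have tendsto_pow_fun : ∀ d : ℝ, 0 < d →
      Tendsto (fun k : ℕ => d ^ ((1 : ℝ) / k)) atTop (𝓝 1) := by
    intro d hd
    have h0 : Tendsto (fun k : ℕ => (1 : ℝ) / k) atTop (𝓝 0) :=
      tendsto_one_div_atTop_nhds_zero_nat
    have := (tendsto_const_nhds : Tendsto (fun _ : ℕ => d) atTop (𝓝 d)).rpow h0
      (Or.inl hd.ne')
    simpa using this
  have rpow_eq : ∀ (c d : ℝ), 0 < c → 0 < d → ∀ k : ℕ, 1 ≤ k →
      (c ^ k * d) ^ ((1 : ℝ) / k) = c * d ^ ((1 : ℝ) / k) := by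
    intro c d hc hd k hk
    have hkne : (k : ℝ) ≠ 0 := Nat.cast_ne_zero.mpr (by omega)
    rw [Real.mul_rpow (by positivity) hd.le]
    congr 1
    rw [← Real.rpow_natCast c k, ← Real.rpow_mul hc.le]
    rw [mul_one_div, div_self hkne, Real.rpow_one]
  constructor
  · -- lower bound: c₁ ≤ R
    have hlim : Tendsto (fun k : ℕ => c₁ * (a / b) ^ ((1 : ℝ) / k)) atTop (𝓝 c₁) := by
      have := (tendsto_pow_fun (a / b) hab_pos).const_mul c₁
      simpa using this
    have hle : ∀ᶠ k : ℕ in atTop,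
        c₁ * (a / b) ^ ((1 : ℝ) / k) ≤ ‖T ^ k‖ ^ ((1 : ℝ) / k) := by
      filter_upwards [eventually_ge_atTop 1] with k hk
      rw [← rpow_eq c₁ (a / b) hc₁_pos hab_pos k hk]
      exact Real.rpow_le_rpow (by positivity) (norm_low k) (by positivity)
    exact le_of_tendsto_of_tendsto hlim hR hle
  · -- upper bound: R ≤ c₂
    have hlim : Tendsto (fun k : ℕ => c₂ * (b / a) ^ ((1 : ℝ) / k)) atTop (𝓝 c₂) := by
      have := (tendsto_pow_fun (b / a) hba_pos).const_mul c₂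
      simpa using this
    have hle : ∀ᶠ k : ℕ in atTop,
        ‖T ^ k‖ ^ ((1 : ℝ) / k) ≤ c₂ * (b / a) ^ ((1 : ℝ) / k) := by
      filter_upwards [eventually_ge_atTop 1] with k hk
      rw [← rpow_eq c₂ (b / a) hc₂_pos hba_pos k hk]
      exact Real.rpow_le_rpow (ContinuousLinearMap.opNorm_nonneg _) (norm_up k) (by positivity)
    exact le_of_tendsto_of_tendsto hR hlim hle
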